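/- Let ρ : G̃ → G be as in the covering setup, with kernel K contained in the center of G̃, and let l ≥ 1. If x̃ = (ã₁,b̃₁,…,ã_l,b̃_l,c̃) and ỹ = (ã'₁,b̃'₁,…,ã'_l,b̃'_l,c̃') are elements of G̃^{2l+1} whose componentwise images under ρ agree and whose common image x satisfies ν_G^l(x) = e, then ν_{G̃}^l(x̃) and ν_{G̃}^l(ỹ) both lie in K and have the same image in K/2K; moreover this common class in K/2K is unchanged if x is replaced by its simultaneous conjugate by any g ∈ G. Hence the obstruction map o₂ : (ν_G^l)⁻¹(e) → K/2K is well defined and descends to the conjugation quotient. -/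

import Mathlib

open scoped commutatorElement in
/-- The commutator map `μ_H^l : H^{2l} → H`,
`(a₁,b₁,…,a_l,b_l) ↦ a₁b₁a₁⁻¹b₁⁻¹ ⋯ a_l b_l a_l⁻¹ b_l⁻¹`, where the `2l`-tuple is
encoded as an `l`-tuple of pairs `(aᵢ, bᵢ)`. -/
def commutatorMap {H : Type*} [Group H] {l : ℕ} (x : Fin l → H × H) : H :=
  (List.ofFn fun i => ⁅(x i).1, (x i).2⁆).prod

/-- The map `ν_H^l : H^{2l+1} → H`, `(a₁,b₁,…,a_l,b_l,c) ↦ μ_H^l(a₁,…,b_l)·c²`. -/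
def nuMap {H : Type*} [Group H] {l : ℕ} (x : (Fin l → H × H) × H) : H :=
  commutatorMap x.1 * x.2 ^ 2

open scoped commutatorElement in
lemma commutatorMap_map {H H' : Type*} [Group H] [Group H'] (φ : H →* H') {l : ℕ}
    (x : Fin l → H × H) :
    commutatorMap (fun i => (φ (x i).1, φ (x i).2)) = φ (commutatorMap x) := by
  simp only [commutatorMap]
  rw [map_list_prod, List.map_ofFn]
  exact congrArg List.prod (congrArg List.ofFn (funext fun i => by
    simp [Function.comp, map_commutatorElement]))

lemma nuMap_map {H H' : Type*} [Group H] [Group H'] (φ : H →* H') {l : ℕ}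
    (x : (Fin l → H × H) × H) :
    nuMap ((fun i => (φ (x.1 i).1, φ (x.1 i).2)), φ x.2) = φ (nuMap x) := by
  simp [nuMap, commutatorMap_map, map_pow]

open scoped commutatorElement in
lemma comm_left_central {H : Type*} [Group H] (a b k : H) (h : ∀ g : H, g * k = k * g) :
    ⁅a * k, b⁆ = ⁅a, b⁆ := by
  simp only [commutatorElement_def, mul_inv_rev]
  have hk : k * b = b * k := (h b).symm
  calc a * k * b * (k⁻¹ * a⁻¹) * b⁻¹ = a * (k * b) * k⁻¹ * a⁻¹ * b⁻¹ := by group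
    _ = a * (b * k) * k⁻¹ * a⁻¹ * b⁻¹ := by rw [hk]
    _ = a * b * a⁻¹ * b⁻¹ := by group

open scoped commutatorElement in
lemma comm_right_central {H : Type*} [Group H] (a b k : H) (h : ∀ g : H, g * k = k * g) :
    ⁅a, b * k⁆ = ⁅a, b⁆ := by
  simp only [commutatorElement_def, mul_inv_rev]
  have hk : k * a⁻¹ = a⁻¹ * k := (h a⁻¹).symm
  calc a * (b * k) * a⁻¹ * (k⁻¹ * b⁻¹) = a * b * (k * a⁻¹) * k⁻¹ * b⁻¹ := by group
    _ = a * b * (a⁻¹ * k) * k⁻¹ * b⁻¹ := by rw [hk]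
    _ = a * b * a⁻¹ * b⁻¹ := by group

open scoped commutatorElement in
lemma comm_central {H : Type*} [Group H] (a b k₁ k₂ : H)
    (h₁ : k₁ ∈ Subgroup.center H) (h₂ : k₂ ∈ Subgroup.center H) :
    ⁅a * k₁, b * k₂⁆ = ⁅a, b⁆ := by
  rw [Subgroup.mem_center_iff] at h₁ h₂
  rw [comm_left_central _ _ _ h₁, comm_right_central _ _ _ h₂]

lemma nuMap_eq_of_central {H : Type*} [Group H] {l : ℕ}
    (xt yt : (Fin l → H × H) × H)
    (hc : ∀ i, (xt.1 i).1⁻¹ * (yt.1 i).1 ∈ Subgroup.center H ∧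
      (xt.1 i).2⁻¹ * (yt.1 i).2 ∈ Subgroup.center H)
    (hc2 : xt.2⁻¹ * yt.2 ∈ Subgroup.center H) :
    nuMap yt = nuMap xt * (xt.2⁻¹ * yt.2) ^ 2 := by
  have hcomm : commutatorMap yt.1 = commutatorMap xt.1 := by
    simp only [commutatorMap]
    refine congrArg List.prod (congrArg List.ofFn (funext fun i => ?_))
    have e1 : (yt.1 i).1 = (xt.1 i).1 * ((xt.1 i).1⁻¹ * (yt.1 i).1) := by group
    have e2 : (yt.1 i).2 = (xt.1 i).2 * ((xt.1 i).2⁻¹ * (yt.1 i).2) := by group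
    rw [e1, e2, comm_central _ _ _ _ (hc i).1 (hc i).2]
  have e3 : yt.2 = xt.2 * (xt.2⁻¹ * yt.2) := by group
  have hcm : Commute xt.2 (xt.2⁻¹ * yt.2) :=
    ((Subgroup.mem_center_iff.mp hc2) xt.2)
  simp only [nuMap]
  rw [hcomm]
  conv_lhs => rw [e3]
  rw [hcm.mul_pow, mul_assoc]

/-- in the universal covering setup `ρ : G̃ → G` with central discrete
kernel `K`, if `xt, yt ∈ G̃^{2l+1}` have the same componentwise image `x` under `ρ` and
`ν_G^l(x) = e`, then `ν_{G̃}^l(xt)` and `ν_{G̃}^l(yt)` lie in `K` and differ by a square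
of an element of `K` (i.e. have the same class in `K/2K`); moreover this class is
unchanged under simultaneous conjugation of `x` by any `g ∈ G`.  Hence the obstruction
map `o₂ : (ν_G^l)⁻¹(e) → K/2K` is well defined and descends to the conjugation
quotient. -/
theorem obstruction_map_well_defined_odd_nonorientable
    {E₁ : Type*} [NormedAddCommGroup E₁] [NormedSpace ℝ E₁]
    {H₁ : Type*} [TopologicalSpace H₁] (I₁ : ModelWithCorners ℝ E₁ H₁)
    (Gt : Type*) [TopologicalSpace Gt] [ChartedSpace H₁ Gt] [Group Gt]
    [IsTopologicalGroup Gt] [LieGroup I₁ (⊤ : ℕ∞) Gt]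
    [CompactSpace Gt] [ConnectedSpace Gt] [SimplyConnectedSpace Gt]
    [LieAlgebra.IsSemisimple ℝ (LeftInvariantDerivation I₁ Gt)]
    {E₂ : Type*} [NormedAddCommGroup E₂] [NormedSpace ℝ E₂]
    {H₂ : Type*} [TopologicalSpace H₂] (I₂ : ModelWithCorners ℝ E₂ H₂)
    (G : Type*) [TopologicalSpace G] [ChartedSpace H₂ G] [Group G]
    [IsTopologicalGroup G] [LieGroup I₂ (⊤ : ℕ∞) G]
    [CompactSpace G] [ConnectedSpace G]
    [LieAlgebra.IsSemisimple ℝ (LeftInvariantDerivation I₂ G)]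
    (ρ : Gt →* G) (hρcont : Continuous ρ) (hρsurj : Function.Surjective ρ)
    [DiscreteTopology ↥(MonoidHom.ker ρ)]
    (hker : MonoidHom.ker ρ ≤ Subgroup.center Gt)
    (l : ℕ) (hl : 1 ≤ l)
    (xt yt : (Fin l → Gt × Gt) × Gt)
    (hxy : (∀ i, ρ (xt.1 i).1 = ρ (yt.1 i).1 ∧ ρ (xt.1 i).2 = ρ (yt.1 i).2) ∧
      ρ xt.2 = ρ yt.2)
    (hx : nuMap ((fun i => (ρ (xt.1 i).1, ρ (xt.1 i).2)), ρ xt.2) = 1) :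
    nuMap xt ∈ MonoidHom.ker ρ ∧ nuMap yt ∈ MonoidHom.ker ρ ∧
      (∃ k ∈ MonoidHom.ker ρ, nuMap xt = nuMap yt * k ^ 2) ∧
      ∀ (g : G) (zt : (Fin l → Gt × Gt) × Gt),
        ((∀ i, ρ (zt.1 i).1 = g * ρ (xt.1 i).1 * g⁻¹ ∧
            ρ (zt.1 i).2 = g * ρ (xt.1 i).2 * g⁻¹) ∧
          ρ zt.2 = g * ρ xt.2 * g⁻¹) →
        ∃ k ∈ MonoidHom.ker ρ, nuMap zt = nuMap xt * k ^ 2  := by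
  classical
  obtain ⟨hxy1, hxy2⟩ := hxy
  have hmemK : ∀ a b : Gt, ρ a = ρ b → a⁻¹ * b ∈ MonoidHom.ker ρ := by
    intro a b h
    simp [MonoidHom.mem_ker, h]
  have h1 : nuMap xt ∈ MonoidHom.ker ρ := by
    rw [MonoidHom.mem_ker, ← nuMap_map ρ xt]
    exact hx
  have h2 : nuMap yt ∈ MonoidHom.ker ρ := by
    rw [MonoidHom.mem_ker, ← nuMap_map ρ yt]
    have heq : (((fun i => (ρ (yt.1 i).1, ρ (yt.1 i).2)) : Fin l → G × G), ρ yt.2)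
        = (((fun i => (ρ (xt.1 i).1, ρ (xt.1 i).2)) : Fin l → G × G), ρ xt.2) := by
      refine Prod.ext ?_ hxy2.symm
      funext i
      show (ρ (yt.1 i).1, ρ (yt.1 i).2) = (ρ (xt.1 i).1, ρ (xt.1 i).2)
      rw [(hxy1 i).1, (hxy1 i).2]
    rw [heq]
    exact hx
  refine ⟨h1, h2, ?_, ?_⟩
  · have hc : ∀ i, (xt.1 i).1⁻¹ * (yt.1 i).1 ∈ Subgroup.center Gt ∧
        (xt.1 i).2⁻¹ * (yt.1 i).2 ∈ Subgroup.center Gt := fun i =>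
      ⟨hker (hmemK _ _ (hxy1 i).1), hker (hmemK _ _ (hxy1 i).2)⟩
    have hc2 : xt.2⁻¹ * yt.2 ∈ MonoidHom.ker ρ := hmemK _ _ hxy2
    have key := nuMap_eq_of_central xt yt hc (hker hc2)
    refine ⟨(xt.2⁻¹ * yt.2)⁻¹, inv_mem hc2, ?_⟩
    rw [key, inv_pow, mul_assoc, mul_inv_cancel, mul_one]
  · rintro g zt ⟨hz1, hz2⟩
    obtain ⟨gt, hgt⟩ := hρsurj g
    set φ : Gt →* Gt := (MulAut.conj gt).toMonoidHom with hφ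
    have hφa : ∀ a : Gt, φ a = gt * a * gt⁻¹ := fun a => rfl
    set wt : (Fin l → Gt × Gt) × Gt :=
      ((fun i => (φ (xt.1 i).1, φ (xt.1 i).2)), φ xt.2) with hwt
    have hρφ : ∀ a : Gt, ρ (φ a) = g * ρ a * g⁻¹ := by
      intro a
      rw [hφa]
      simp [hgt]
    have hc : ∀ i, (wt.1 i).1⁻¹ * (zt.1 i).1 ∈ Subgroup.center Gt ∧
        (wt.1 i).2⁻¹ * (zt.1 i).2 ∈ Subgroup.center Gt := by
      intro i
      constructor
      · exact hker (hmemK _ _ (by rw [hρφ, (hz1 i).1]))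
      · exact hker (hmemK _ _ (by rw [hρφ, (hz1 i).2]))
    have hc2 : wt.2⁻¹ * zt.2 ∈ MonoidHom.ker ρ := hmemK _ _ (by rw [hρφ, hz2])
    have key := nuMap_eq_of_central wt zt hc (hker hc2)
    have hwmap : nuMap wt = nuMap xt := by
      rw [hwt, nuMap_map φ xt, hφa]
      have hcen := Subgroup.mem_center_iff.mp (hker h1) gt
      rw [hcen, mul_assoc, mul_inv_cancel, mul_one]
    exact ⟨wt.2⁻¹ * zt.2, hc2, by rw [key, hwmap]⟩
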